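/- arXiv:1304.4922 — 7 statements merged into one kernel-verified Lean document; each statement's English description precedes it below -/
import Mathlib

section
/- Let n ≥ 1, A = (a_{ij}) ∈ M_n(ℂ), and t ≥ 0. Then S_t(AᴴA) − (S_t A)ᴴ (S_t A) = S_t(T(A)ᴴ T(A)) − (S_t T(A))ᴴ (S_t T(A)), i.e. S_t|A|² − |S_t A|² = S_t|T(A)|² − |S_t T(A)|² where |X|² = XᴴX. -/
open scoped Matrix

/-- The Poisson-like Schur multiplier semigroup `S_t` on `M_n(ℂ)`:
`S_t(A)_{ij} = e^{-t|i-j|} a_{ij}`. -/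
noncomputable def poissonSchur (n : ℕ) (t : ℝ) (A : Matrix (Fin n) (Fin n) ℂ) :
    Matrix (Fin n) (Fin n) ℂ :=
  fun i j => (Real.exp (-t * |((i : ℕ) : ℝ) - ((j : ℕ) : ℝ)|) : ℂ) * A i j

/-- The triangular transform `T : M_n(ℂ) → M_n(ℂ)`, `T(A)_{ij} = sgn(i-j) a_{ij}`. -/
def triangular (n : ℕ) (A : Matrix (Fin n) (Fin n) ℂ) : Matrix (Fin n) (Fin n) ℂ :=
  fun i j => ((Int.sign ((i : ℤ) - (j : ℤ)) : ℤ) : ℂ) * A i j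

lemma key_abs (x y z : ℤ) (h : Int.sign (y - x) * Int.sign (y - z) ≠ 1) :
    |x - y| + |y - z| = |x - z| := by
  have h' : (y - x) * (y - z) ≤ 0 := by
    by_contra hc
    push_neg at hc
    exact h (by rw [← Int.sign_mul]; exact Int.sign_eq_one_of_pos hc)
  rcases mul_nonpos_iff.mp h' with ⟨h1, h2⟩ | ⟨h1, h2⟩
  · rw [abs_of_nonpos (by linarith), abs_of_nonpos (by linarith),
      abs_of_nonpos (by linarith)]
    ring
  · rw [abs_of_nonneg (by linarith), abs_of_nonneg (by linarith),
      abs_of_nonneg (by linarith)]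
    ring

/-- `S_t|A|² − |S_t A|² = S_t|T(A)|² − |S_t T(A)|²` where `|X|² = XᴴX`. -/
theorem poissonSchur_sub_eq_triangular (n : ℕ) (hn : 1 ≤ n)
    (A : Matrix (Fin n) (Fin n) ℂ) (t : ℝ) (ht : 0 ≤ t) :
    poissonSchur n t (Aᴴ * A) - (poissonSchur n t A)ᴴ * (poissonSchur n t A) =
      poissonSchur n t ((triangular n A)ᴴ * triangular n A)
        - (poissonSchur n t (triangular n A))ᴴ * (poissonSchur n t (triangular n A)) := by
  ext i j
  simp only [Matrix.sub_apply, Matrix.mul_apply, Matrix.conjTranspose_apply,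
    poissonSchur, triangular, Finset.mul_sum, ← Finset.sum_sub_distrib]
  apply Finset.sum_congr rfl
  intro k _
  set s1 : ℤ := Int.sign ((k : ℤ) - (i : ℤ)) with hs1
  set s2 : ℤ := Int.sign ((k : ℤ) - (j : ℤ)) with hs2
  simp only [star_mul', Complex.star_def, map_mul, Complex.conj_ofReal, map_intCast]
  by_cases h : s1 * s2 = 1
  · have hc : ((s1 : ℂ)) * ((s2 : ℂ)) = 1 := by
      rw [← Int.cast_mul, h, Int.cast_one]
    linear_combination (-((Real.exp (-t * |((i : ℕ) : ℝ) - ((j : ℕ) : ℝ)|) : ℂ)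
        - (Real.exp (-t * |((k : ℕ) : ℝ) - ((i : ℕ) : ℝ)|) : ℂ)
          * (Real.exp (-t * |((k : ℕ) : ℝ) - ((j : ℕ) : ℝ)|) : ℂ))
        * (starRingEnd ℂ) (A k i) * A k j) * hc
  · have habs : |(i : ℤ) - (k : ℤ)| + |(k : ℤ) - (j : ℤ)| = |(i : ℤ) - (j : ℤ)| :=
      key_abs _ _ _ h
    have habsR : |((i : ℕ) : ℝ) - ((k : ℕ) : ℝ)| + |((k : ℕ) : ℝ) - ((j : ℕ) : ℝ)|
        = |((i : ℕ) : ℝ) - ((j : ℕ) : ℝ)| := by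
      have := congrArg (fun m : ℤ => (m : ℝ)) habs
      push_cast at this
      exact this
    have hE : Real.exp (-t * |((i : ℕ) : ℝ) - ((j : ℕ) : ℝ)|)
        = Real.exp (-t * |((k : ℕ) : ℝ) - ((i : ℕ) : ℝ)|)
          * Real.exp (-t * |((k : ℕ) : ℝ) - ((j : ℕ) : ℝ)|) := by
      rw [← Real.exp_add, ← habsR, abs_sub_comm ((k : ℕ) : ℝ) ((i : ℕ) : ℝ)]
      ring_nf
    rw [hE]
    push_cast
    ring
end

section
/- Let n ≥ 1 and A ∈ M_n(ℂ). Then sup_{0<t<∞} ‖ S_t(T(A)ᴴT(A)) − (S_t T(A))ᴴ(S_t T(A)) ‖_∞^{1/2} = sup_{0<t<∞} ‖ S_t(AᴴA) − (S_t A)ᴴ(S_t A) ‖_∞^{1/2}; that is, the triangular transform T is isometric for the column-BMO seminorm ‖A‖_{BMO_c(S)} = sup_{0<t<∞} ‖S_t|A|² − |S_t A|²‖_∞^{1/2} associated with the semigroup S. -/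
open scoped Matrix

/-- The operator norm of a matrix acting on `ℓ₂(n)`. -/
noncomputable def opNorm {n : ℕ} (A : Matrix (Fin n) (Fin n) ℂ) : ℝ :=
  ‖Matrix.toEuclideanCLM (𝕜 := ℂ) A‖

lemma abs_key (x y z : ℤ) (h : (z - x) * (z - y) ≤ 0) :
    |x - y| = |z - x| + |z - y| := by
  rcases mul_nonpos_iff.mp h with ⟨h1, h2⟩ | ⟨h1, h2⟩
  · rw [abs_of_nonpos (by linarith), abs_of_nonneg h1, abs_of_nonpos h2]; ring
  · rw [abs_of_nonneg (by linarith), abs_of_nonpos h1, abs_of_nonneg h2]; ring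

lemma exp_key (t : ℝ) (x y z : ℕ)
    (h : Int.sign ((z : ℤ) - (x : ℤ)) * Int.sign ((z : ℤ) - (y : ℤ)) ≠ 1) :
    Real.exp (-t * |(x : ℝ) - (y : ℝ)|) =
      Real.exp (-t * |(z : ℝ) - (x : ℝ)|) * Real.exp (-t * |(z : ℝ) - (y : ℝ)|) := by
  have hm : ((z : ℤ) - x) * ((z : ℤ) - y) ≤ 0 := by
    by_contra hc
    push_neg at hc
    exact h (by rw [← Int.sign_mul, Int.sign_eq_one_iff_pos]; exact hc)
  have habs := abs_key (x : ℤ) (y : ℤ) (z : ℤ) hm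
  have habs' : |(x : ℝ) - y| = |(z : ℝ) - x| + |(z : ℝ) - y| := by
    have := congrArg (Int.cast : ℤ → ℝ) habs
    push_cast at this
    exact this
  rw [← Real.exp_add, habs']
  ring_nf

/-- The triangular transform is isometric for the column-BMO seminorm
`‖A‖_{BMO_c(S)} = sup_{0<t<∞} ‖S_t|A|² − |S_t A|²‖_∞^{1/2}`. -/
theorem triangular_isometric_BMO (n : ℕ) (hn : 1 ≤ n) (A : Matrix (Fin n) (Fin n) ℂ) :
    (⨆ t : Set.Ioi (0 : ℝ), Real.sqrt (opNorm
        (poissonSchur n t ((triangular n A)ᴴ * triangular n A)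
          - (poissonSchur n t (triangular n A))ᴴ * (poissonSchur n t (triangular n A))))) =
      ⨆ t : Set.Ioi (0 : ℝ), Real.sqrt (opNorm
        (poissonSchur n t (Aᴴ * A) - (poissonSchur n t A)ᴴ * (poissonSchur n t A))) := by
  have hmat : ∀ t : ℝ,
      poissonSchur n t ((triangular n A)ᴴ * triangular n A)
          - (poissonSchur n t (triangular n A))ᴴ * (poissonSchur n t (triangular n A))
        = poissonSchur n t (Aᴴ * A) - (poissonSchur n t A)ᴴ * (poissonSchur n t A) := by
    intro t
    ext i j
    simp only [poissonSchur, triangular, Matrix.sub_apply, Matrix.mul_apply,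
      Matrix.conjTranspose_apply]
    rw [Finset.mul_sum, Finset.mul_sum, ← Finset.sum_sub_distrib, ← Finset.sum_sub_distrib]
    refine Finset.sum_congr rfl fun k _ => ?_
    simp only [star_mul', Complex.star_def, map_intCast, Complex.conj_ofReal]
    by_cases hs : Int.sign ((k : ℤ) - (i : ℤ)) * Int.sign ((k : ℤ) - (j : ℤ)) = 1
    · have h1 : ((Int.sign ((k : ℤ) - (i : ℤ)) : ℤ) : ℂ)
          * ((Int.sign ((k : ℤ) - (j : ℤ)) : ℤ) : ℂ) = 1 := by
        exact_mod_cast congrArg (Int.cast : ℤ → ℂ) hs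
      linear_combination (Real.exp (-t * |((i : ℕ) : ℝ) - ((j : ℕ) : ℝ)|)
          - Real.exp (-t * |((k : ℕ) : ℝ) - ((i : ℕ) : ℝ)|)
            * Real.exp (-t * |((k : ℕ) : ℝ) - ((j : ℕ) : ℝ)|) : ℂ)
          * ((starRingEnd ℂ) (A k i)) * (A k j) * (h1 - 1)
          + 0
    · have he := exp_key t i j k hs
      have he' : (Real.exp (-t * |((i : ℕ) : ℝ) - ((j : ℕ) : ℝ)|) : ℂ)
          = (Real.exp (-t * |((k : ℕ) : ℝ) - ((i : ℕ) : ℝ)|) : ℂ)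
            * (Real.exp (-t * |((k : ℕ) : ℝ) - ((j : ℕ) : ℝ)|) : ℂ) := by
        exact_mod_cast congrArg (Complex.ofReal) he
      rw [he']
      ring
  exact iSup_congr fun t => by rw [hmat]
end

section
/- Let H be a real inner product space, n ≥ 1, b : {1,…,n} → H any map, and t ≥ 0. Then the n×n matrix with entries M_{ij} = exp( −t ‖b(i) − b(j)‖²_H ) is positive semidefinite. -/
open scoped ComplexOrder

section Aux

open Matrix Finset

variable {n : ℕ}

private lemma herm_symm {A : Matrix (Fin n) (Fin n) ℝ} (hA : A.IsHermitian) (i j : Fin n) :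
    A j i = A i j := by
  have := congrFun (congrFun hA i) j
  simpa [Matrix.conjTranspose_apply] using this

private lemma dot_eq (A : Matrix (Fin n) (Fin n) ℝ) (x : Fin n → ℝ) :
    star x ⬝ᵥ A *ᵥ x = ∑ i, ∑ j, x i * (A i j * x j) := by
  simp [dotProduct, Matrix.mulVec, Finset.mul_sum]

open scoped MatrixOrder in
private lemma psd_decomp {A : Matrix (Fin n) (Fin n) ℝ} (hA : A.PosSemidef) :
    ∃ B : Matrix (Fin n) (Fin n) ℝ, A = Bᴴ * B := by
  obtain ⟨B, hB⟩ := CStarAlgebra.nonneg_iff_eq_star_mul_self.mp hA.nonneg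
  exact ⟨B, hB⟩

/-- Schur product theorem (real case). -/
private lemma schur_psd {A B : Matrix (Fin n) (Fin n) ℝ} (hA : A.PosSemidef)
    (hB : B.PosSemidef) : (Matrix.of fun i j => A i j * B i j).PosSemidef := by
  obtain ⟨C, hC⟩ := psd_decomp hA
  have hAC : ∀ i j, A i j = ∑ r, C r i * C r j := by
    intro i j
    rw [hC]
    simp [Matrix.mul_apply, Matrix.conjTranspose_apply]
  refine Matrix.posSemidef_iff_dotProduct_mulVec.mpr ⟨?_, ?_⟩
  · ext i j
    simp only [Matrix.conjTranspose_apply, Matrix.of_apply, star_trivial]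
    rw [herm_symm hA.1, herm_symm hB.1]
  · intro x
    rw [dot_eq]
    have h1 : ∀ i j : Fin n, x i * ((Matrix.of fun i j => A i j * B i j) i j * x j)
        = ∑ r, (C r i * x i) * (B i j * (C r j * x j)) := by
      intro i j
      simp only [Matrix.of_apply]
      rw [hAC i j, Finset.sum_mul, Finset.sum_mul, Finset.mul_sum]
      exact Finset.sum_congr rfl fun r _ => by ring
    simp only [h1]
    have hswap : ∑ i, ∑ j, ∑ r, (C r i * x i) * (B i j * (C r j * x j))
        = ∑ r, ∑ i, ∑ j, (C r i * x i) * (B i j * (C r j * x j)) :=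
      (Finset.sum_congr rfl fun i _ => Finset.sum_comm).trans Finset.sum_comm
    rw [hswap]
    refine Finset.sum_nonneg fun r _ => ?_
    have := hB.dotProduct_mulVec_nonneg (fun i => C r i * x i)
    rwa [dot_eq] at this

private lemma hadamard_pow_psd {A : Matrix (Fin n) (Fin n) ℝ} (hA : A.PosSemidef) (k : ℕ) :
    (Matrix.of fun i j => A i j ^ k).PosSemidef := by
  induction k with
  | zero =>
    refine Matrix.posSemidef_iff_dotProduct_mulVec.mpr ⟨?_, ?_⟩
    · ext i j
      simp [Matrix.conjTranspose_apply]
    · intro x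
      rw [dot_eq]
      simp only [Matrix.of_apply, pow_zero, one_mul]
      have : ∑ i, ∑ j, x i * x j = (∑ i, x i) ^ 2 := by
        rw [sq, Finset.sum_mul_sum]
      rw [this]
      exact sq_nonneg _
  | succ k ih =>
    have h := schur_psd ih hA
    have e : (Matrix.of fun i j => (Matrix.of fun i j => A i j ^ k) i j * A i j)
        = (Matrix.of fun i j => A i j ^ (k + 1)) := by
      ext i j
      simp [pow_succ]
    exact e ▸ h

private lemma gram_psd {H : Type*} [NormedAddCommGroup H] [InnerProductSpace ℝ H]
    (b : Fin n → H) : (Matrix.of fun i j => (inner ℝ (b i) (b j) : ℝ)).PosSemidef := by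
  refine Matrix.posSemidef_iff_dotProduct_mulVec.mpr ⟨?_, ?_⟩
  · ext i j
    simp [Matrix.conjTranspose_apply, real_inner_comm]
  · intro x
    rw [dot_eq]
    simp only [Matrix.of_apply]
    have key : (inner ℝ (∑ i, x i • b i) (∑ j, x j • b j) : ℝ)
        = ∑ i, ∑ j, x i * ((inner ℝ (b i) (b j) : ℝ) * x j) := by
      rw [sum_inner]
      refine Finset.sum_congr rfl fun i _ => ?_
      rw [inner_sum]
      refine Finset.sum_congr rfl fun j _ => ?_
      rw [real_inner_smul_left, real_inner_smul_right]
      ring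
    rw [← key]
    exact real_inner_self_nonneg

private lemma exp_entry_psd {A : Matrix (Fin n) (Fin n) ℝ} (hA : A.PosSemidef) :
    (Matrix.of fun i j => Real.exp (A i j)).PosSemidef := by
  have hexp : ∀ y : ℝ, Real.exp y = ∑' k : ℕ, y ^ k / (Nat.factorial k : ℝ) := by
    intro y
    rw [Real.exp_eq_exp_ℝ, NormedSpace.exp_eq_tsum_div]
  refine Matrix.posSemidef_iff_dotProduct_mulVec.mpr ⟨?_, ?_⟩
  · ext i j
    simp only [Matrix.conjTranspose_apply, Matrix.of_apply, star_trivial]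
    rw [herm_symm hA.1]
  · intro x
    rw [dot_eq]
    have hsummand : ∀ i j : Fin n,
        Summable fun k : ℕ => x i * (A i j ^ k / (Nat.factorial k : ℝ) * x j) :=
      fun i j => ((Real.summable_pow_div_factorial (A i j)).mul_right (x j)).mul_left (x i)
    have key : ∑ i, ∑ j, x i * ((Matrix.of fun i j => Real.exp (A i j)) i j * x j)
        = ∑' k : ℕ, ∑ i, ∑ j, x i * (A i j ^ k / (Nat.factorial k : ℝ) * x j) := by
      rw [Summable.tsum_finsetSum fun i _ => summable_sum fun j _ => hsummand i j]
      refine Finset.sum_congr rfl fun i _ => ?_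
      rw [Summable.tsum_finsetSum fun j _ => hsummand i j]
      refine Finset.sum_congr rfl fun j _ => ?_
      simp only [Matrix.of_apply]
      rw [hexp (A i j), ← tsum_mul_right, ← tsum_mul_left]
      -- done
    rw [key]
    refine tsum_nonneg fun k => ?_
    have hk := (hadamard_pow_psd hA k).dotProduct_mulVec_nonneg x
    rw [dot_eq] at hk
    simp only [Matrix.of_apply] at hk
    have : ∑ i, ∑ j, x i * (A i j ^ k / (Nat.factorial k : ℝ) * x j)
        = (1 / (Nat.factorial k : ℝ)) * ∑ i, ∑ j, x i * (A i j ^ k * x j) := by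
      rw [Finset.mul_sum]
      refine Finset.sum_congr rfl fun i _ => ?_
      rw [Finset.mul_sum]
      exact Finset.sum_congr rfl fun j _ => by ring
    rw [this]
    exact mul_nonneg (by positivity) hk

private lemma map_ofReal_psd {M : Matrix (Fin n) (Fin n) ℝ} (hM : M.PosSemidef) :
    (M.map (Complex.ofReal)).PosSemidef := by
  obtain ⟨B, rfl⟩ := psd_decomp hM
  have h : (Bᴴ * B).map Complex.ofReal
      = (B.map Complex.ofReal)ᴴ * (B.map Complex.ofReal) := by
    have h1 : (Bᴴ * B).map Complex.ofReal
        = Bᴴ.map Complex.ofReal * B.map Complex.ofReal := by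
      ext i j
      simp [Matrix.mul_apply, Matrix.map_apply]
    rw [h1]
    congr 1
    rw [Matrix.conjTranspose_map Complex.ofReal (fun a => by simp [Complex.conj_ofReal])]
  rw [h]
  exact Matrix.posSemidef_conjTranspose_mul_self _

end Aux

open Matrix in

/-- Schoenberg-type fact: for any map `b : {1,…,n} → H` into a real inner product
space and `t ≥ 0`, the matrix `(exp(-t‖b(i)-b(j)‖²))_{ij}` is positive semidefinite. -/
theorem posSemidef_exp_neg_dist_sq (H : Type*) [NormedAddCommGroup H]
    [InnerProductSpace ℝ H] (n : ℕ) (hn : 1 ≤ n) (b : Fin n → H) (t : ℝ) (ht : 0 ≤ t) :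
    (Matrix.of fun i j : Fin n =>
      ((Real.exp (-t * ‖b i - b j‖ ^ 2) : ℝ) : ℂ)).PosSemidef := by
  set c : Fin n → H := fun i => Real.sqrt (2 * t) • b i with hc
  have hgram : ∀ i j, (inner ℝ (c i) (c j) : ℝ) = 2 * t * inner ℝ (b i) (b j) := by
    intro i j
    rw [hc]
    simp only
    rw [real_inner_smul_left, real_inner_smul_right, ← mul_assoc,
      Real.mul_self_sqrt (by linarith : (0:ℝ) ≤ 2 * t)]
  set E : Matrix (Fin n) (Fin n) ℝ :=
    Matrix.of fun i j => Real.exp ((Matrix.of fun i j => (inner ℝ (c i) (c j) : ℝ)) i j) with hEdef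
  have hE : E.PosSemidef := exp_entry_psd (gram_psd c)
  set d : Fin n → ℝ := fun i => Real.exp (-t * ‖b i‖ ^ 2) with hd
  have hMeq : (Matrix.of fun i j : Fin n => Real.exp (-t * ‖b i - b j‖ ^ 2))
      = Matrix.diagonal d * E * Matrix.diagonal d := by
    ext i j
    rw [Matrix.mul_diagonal, Matrix.diagonal_mul]
    rw [hEdef]
    simp only [Matrix.of_apply, hd]
    rw [hgram, ← Real.exp_add, ← Real.exp_add]
    congr 1
    have hns : ‖b i - b j‖ ^ 2 = ‖b i‖ ^ 2 - 2 * inner ℝ (b i) (b j) + ‖b j‖ ^ 2 :=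
      norm_sub_sq_real (b i) (b j)
    rw [hns]
    ring
  have hreal : (Matrix.of fun i j : Fin n =>
      Real.exp (-t * ‖b i - b j‖ ^ 2)).PosSemidef := by
    rw [hMeq]
    have h1 := hE.mul_mul_conjTranspose_same (Matrix.diagonal d)
    have hdiag : (Matrix.diagonal d)ᴴ = Matrix.diagonal d := by
      simp [Matrix.diagonal_conjTranspose]
    rwa [hdiag] at h1
  have hfin : (Matrix.of fun i j : Fin n =>
      ((Real.exp (-t * ‖b i - b j‖ ^ 2) : ℝ) : ℂ))
      = (Matrix.of fun i j : Fin n => Real.exp (-t * ‖b i - b j‖ ^ 2)).map Complex.ofReal := by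
    ext i j
    simp [Matrix.map_apply]
  rw [hfin]
  exact map_ofReal_psd hreal
end

section
/- Let F_S be the free group on a set S and let |g| denote the word length of g ∈ F_S (the length of its reduced word). Then the word length is a conditionally negative length function: |e| = 0, |g⁻¹| = |g|, and for every finite subset F ⊆ F_S and every β : F_S → ℂ with ∑_{g∈F} β_g = 0, the sum ∑_{g,h∈F} conj(β_g) β_h |g⁻¹h| is a nonpositive real number. -/
open scoped BigOperators ComplexConjugate

namespace CondNegAux

open FreeGroup List

variable {α : Type*} [DecidableEq α]

/-- The no-cancellation relation between adjacent letters. -/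
def R (x y : α × Bool) : Prop := ¬(x.1 = y.1 ∧ x.2 = !y.2)

lemma isRed_reduce (L : List (α × Bool)) : List.Chain' R (reduce L) := by
  induction L with
  | nil => exact List.isChain_nil
  | cons x L ih =>
    rw [reduce.cons]
    rcases h : reduce L with _ | ⟨hd, tl⟩
    · exact List.isChain_singleton _
    · rw [h] at ih
      dsimp only
      split_ifs with hc
      · exact ih.tail
      · exact List.isChain_cons_cons.2 ⟨hc, ih⟩

lemma reduce_eq_self {L : List (α × Bool)} (h : List.Chain' R L) : reduce L = L := by
  induction L with
  | nil => rfl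
  | cons x L ih =>
    rw [reduce.cons, ih h.tail]
    cases L with
    | nil => rfl
    | cons y tl =>
      dsimp only
      rw [if_neg (List.isChain_cons_cons.1 h).1]

/-- Longest common prefix. -/
def lcp : List (α × Bool) → List (α × Bool) → List (α × Bool)
  | x :: xs, y :: ys => if x = y then x :: lcp xs ys else []
  | _, _ => []

lemma lcp_prefix_left : ∀ L1 L2 : List (α × Bool), lcp L1 L2 <+: L1
  | [], _ => by simp [lcp]
  | x :: xs, [] => by simp [lcp]
  | x :: xs, y :: ys => by
    rw [lcp]
    split_ifs with h
    · exact List.cons_prefix_cons.2 ⟨rfl, lcp_prefix_left xs ys⟩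
    · exact nil_prefix

lemma lcp_prefix_right : ∀ L1 L2 : List (α × Bool), lcp L1 L2 <+: L2
  | [], _ => by simp [lcp]
  | x :: xs, [] => by simp [lcp]
  | x :: xs, y :: ys => by
    rw [lcp]
    split_ifs with h
    · subst h; exact List.cons_prefix_cons.2 ⟨rfl, lcp_prefix_right xs ys⟩
    · exact nil_prefix

lemma prefix_lcp : ∀ {L1 L2 u : List (α × Bool)}, u <+: L1 → u <+: L2 → u <+: lcp L1 L2
  | _, _, [] => fun _ _ => nil_prefix
  | [], _, u :: us => fun h _ => by simp at h
  | x :: xs, [], u :: us => fun _ h => by simp at h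
  | x :: xs, y :: ys, u :: us => fun h1 h2 => by
    obtain ⟨hu1, h1'⟩ := List.cons_prefix_cons.1 h1
    obtain ⟨hu2, h2'⟩ := List.cons_prefix_cons.1 h2
    rw [lcp, if_pos (hu1.symm.trans hu2)]
    subst hu1
    exact List.cons_prefix_cons.2 ⟨rfl, prefix_lcp h1' h2'⟩

/-- The finset of nonempty prefixes of a list. -/
def prefs (L : List (α × Bool)) : Finset (List (α × Bool)) :=
  (Finset.range L.length).image (fun k => L.take (k + 1))

lemma mem_prefs {L u : List (α × Bool)} : u ∈ prefs L ↔ u ≠ [] ∧ u <+: L := by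
  constructor
  · rintro hu
    obtain ⟨k, hk, rfl⟩ := Finset.mem_image.1 hu
    rw [Finset.mem_range] at hk
    refine ⟨?_, take_prefix _ _⟩
    have : (L.take (k + 1)).length = k + 1 := by
      rw [length_take]; omega
    intro h; rw [h] at this; simp at this
  · rintro ⟨hne, hpre⟩
    have hlen : u.length ≤ L.length := hpre.length_le
    have hpos : 1 ≤ u.length := by
      cases u with
      | nil => exact absurd rfl hne
      | cons a l => simp
    refine Finset.mem_image.2 ⟨u.length - 1, Finset.mem_range.2 (by omega), ?_⟩
    have : u.length - 1 + 1 = u.length := by omega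
    rw [this, ← List.prefix_iff_eq_take.1 hpre]

lemma card_prefs (L : List (α × Bool)) : (prefs L).card = L.length := by
  rw [prefs, Finset.card_image_of_injOn, Finset.card_range]
  intro k hk k' hk' h
  rw [Finset.mem_coe, Finset.mem_range] at hk hk'
  have := congrArg List.length h
  rw [length_take, length_take] at this
  omega

lemma prefs_inter (L1 L2 : List (α × Bool)) :
    prefs L1 ∩ prefs L2 = prefs (lcp L1 L2) := by
  ext u
  simp only [Finset.mem_inter, mem_prefs]
  constructor
  · rintro ⟨⟨hne, h1⟩, ⟨_, h2⟩⟩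
    exact ⟨hne, prefix_lcp h1 h2⟩
  · rintro ⟨hne, h⟩
    exact ⟨⟨hne, h.trans (lcp_prefix_left _ _)⟩, ⟨hne, h.trans (lcp_prefix_right _ _)⟩⟩

lemma chain'_invRev {a : List (α × Bool)} (h : List.Chain' R a) :
    List.Chain' R (invRev a) := by
  rw [invRev, List.Chain', List.isChain_reverse, List.isChain_map]
  refine h.imp ?_
  rintro x y hxy ⟨h1, h2⟩
  exact hxy ⟨h1.symm, by simpa using h2.symm⟩

/-- Key combinatorial identity: `|g⁻¹h| + 2 p = |g| + |h|`. -/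
lemma norm_inv_mul (g h : FreeGroup α) :
    (g⁻¹ * h).norm + 2 * (lcp g.toWord h.toWord).length = g.norm + h.norm := by
  obtain ⟨a, hwa⟩ := lcp_prefix_left g.toWord h.toWord
  obtain ⟨b, hwb⟩ := lcp_prefix_right g.toWord h.toWord
  have hred1 : List.Chain' R g.toWord := by
    rw [← FreeGroup.reduce_toWord g]; exact isRed_reduce _
  have hred2 : List.Chain' R h.toWord := by
    rw [← FreeGroup.reduce_toWord h]; exact isRed_reduce _
  -- heads of a and b differ
  have hheads : ∀ x : α × Bool, x ∈ a.head? → x ∈ b.head? → False := by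
    intro x hxa hxb
    cases a with
    | nil => simp at hxa
    | cons a0 a' =>
      cases b with
      | nil => simp at hxb
      | cons b0 b' =>
        simp only [List.head?_cons, Option.mem_def, Option.some.injEq] at hxa hxb
        subst hxa
        have h1 : lcp g.toWord h.toWord ++ [a0] <+: g.toWord :=
          ⟨a', by simpa [List.append_assoc] using hwa⟩
        have h2 : lcp g.toWord h.toWord ++ [a0] <+: h.toWord :=
          ⟨b', by rw [← hxb]; simpa [List.append_assoc] using hwb⟩
        have := (prefix_lcp h1 h2).length_le
        simp at this
  -- a and b are reduced
  have hra : List.Chain' R a := hred1.suffix ⟨_, hwa⟩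
  have hrb : List.Chain' R b := hred2.suffix ⟨_, hwb⟩
  -- invRev a ++ b is reduced
  have hjunction : ∀ x ∈ (invRev a).getLast?, ∀ y ∈ b.head?, R x y := by
    intro x hx y hy
    rcases a with _ | ⟨a0, a'⟩
    · rw [FreeGroup.invRev_empty] at hx; simp at hx
    · have heq : invRev (a0 :: a') = invRev a' ++ [(a0.1, !a0.2)] := by
        simp [invRev]
      rw [heq, List.getLast?_concat] at hx
      simp only [Option.mem_def, Option.some.injEq] at hx
      subst hx
      rintro ⟨h1, h2⟩
      apply hheads y
      · simp only [List.head?_cons, Option.mem_def, Option.some.injEq]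
        ext
        · simpa using h1
        · simpa using h2
      · exact hy
  have hredab : List.Chain' R (invRev a ++ b) :=
    List.isChain_append.2 ⟨chain'_invRev hra, hrb, hjunction⟩
  -- generalize the common prefix
  generalize hlcp : lcp g.toWord h.toWord = w at hwa hwb ⊢
  -- identify g⁻¹ * h
  have hgh : g⁻¹ * h = FreeGroup.mk (invRev a ++ b) := by
    calc g⁻¹ * h = (FreeGroup.mk g.toWord)⁻¹ * FreeGroup.mk h.toWord := by
          rw [FreeGroup.mk_toWord, FreeGroup.mk_toWord]
      _ = (FreeGroup.mk (w ++ a))⁻¹ * FreeGroup.mk (w ++ b) := by rw [hwa, hwb]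
      _ = FreeGroup.mk (invRev a ++ b) := by
          rw [← FreeGroup.mul_mk, ← FreeGroup.mul_mk, ← FreeGroup.mul_mk,
            ← FreeGroup.inv_mk]
          group
  have hnorm : (g⁻¹ * h).norm = a.length + b.length := by
    rw [hgh, FreeGroup.norm, FreeGroup.toWord_mk, reduce_eq_self hredab,
      List.length_append, FreeGroup.invRev_length]
  have hl1 : g.norm = w.length + a.length := by
    rw [FreeGroup.norm, ← hwa, List.length_append]
  have hl2 : h.norm = w.length + b.length := by
    rw [FreeGroup.norm, ← hwb, List.length_append]
  omega

end CondNegAux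

/-- The word length on a free group is a conditionally negative length function:
`|e| = 0`, `|g⁻¹| = |g|`, and `∑ β_g = 0` implies
`∑_{g,h} conj(β_g) β_h |g⁻¹h|` is a nonpositive real number. -/
theorem freeGroup_wordLength_cond_negative (S : Type*) [DecidableEq S] :
    ((1 : FreeGroup S).norm = 0) ∧ (∀ g : FreeGroup S, g⁻¹.norm = g.norm) ∧
      ∀ (F : Finset (FreeGroup S)) (β : FreeGroup S → ℂ), ∑ g ∈ F, β g = 0 →
        ∃ r : ℝ, r ≤ 0 ∧
          (∑ g ∈ F, ∑ h ∈ F, conj (β g) * β h * (((g⁻¹ * h).norm : ℕ) : ℂ)) = (r : ℂ) := by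
  refine ⟨FreeGroup.norm_one, fun g => FreeGroup.norm_inv_eq, ?_⟩
  intro F β hsum
  classical
  open CondNegAux in
  -- the ambient finset of prefixes
  set W : Finset (List (S × Bool)) := F.biUnion (fun g => prefs g.toWord) with hW
  set A : List (S × Bool) → ℂ :=
    fun w => ∑ g ∈ F, (if w ∈ prefs g.toWord then β g else 0) with hA
  refine ⟨-2 * ∑ w ∈ W, Complex.normSq (A w), ?_, ?_⟩
  · have : (0:ℝ) ≤ ∑ w ∈ W, Complex.normSq (A w) :=
      Finset.sum_nonneg fun w _ => Complex.normSq_nonneg _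
    linarith
  -- cardinality of common prefixes as a sum over W
  have hcard : ∀ g ∈ F, ∀ h ∈ F,
      ((prefs g.toWord ∩ prefs h.toWord).card : ℂ) =
        ∑ w ∈ W, (if w ∈ prefs g.toWord then (1:ℂ) else 0) *
          (if w ∈ prefs h.toWord then (1:ℂ) else 0) := by
    intro g hg h hh
    have hsub : prefs g.toWord ∩ prefs h.toWord ⊆ W :=
      (Finset.inter_subset_left).trans (Finset.subset_biUnion_of_mem (fun g => prefs g.toWord) hg)
    have : ∀ w : List (S × Bool),
        (if w ∈ prefs g.toWord then (1:ℂ) else 0) *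
          (if w ∈ prefs h.toWord then (1:ℂ) else 0) =
        (if w ∈ prefs g.toWord ∩ prefs h.toWord then (1:ℂ) else 0) := by
      intro w
      by_cases h1 : w ∈ prefs g.toWord <;> by_cases h2 : w ∈ prefs h.toWord <;>
        simp [Finset.mem_inter, h1, h2]
    rw [Finset.sum_congr rfl fun w _ => this w, Finset.sum_boole]
    congr 1
    rw [Finset.filter_mem_eq_inter, Finset.inter_eq_right.2 hsub]
  -- the norm identity in ℂ
  have hkey : ∀ g ∈ F, ∀ h ∈ F,
      (((g⁻¹ * h).norm : ℕ) : ℂ) =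
        (g.norm : ℂ) + (h.norm : ℂ) -
          2 * ((prefs g.toWord ∩ prefs h.toWord).card : ℂ) := by
    intro g hg h hh
    have h1 := norm_inv_mul g h
    have h2 : (prefs g.toWord ∩ prefs h.toWord).card =
        (lcp g.toWord h.toWord).length := by
      rw [prefs_inter, card_prefs]
    have := congrArg (Nat.cast : ℕ → ℂ) h1
    push_cast at this
    rw [h2]
    push_cast
    linear_combination this
  -- rewrite the double sum
  have hconjsum : ∑ g ∈ F, conj (β g) = 0 := by
    rw [← map_sum, hsum, map_zero]
  calc ∑ g ∈ F, ∑ h ∈ F, conj (β g) * β h * (((g⁻¹ * h).norm : ℕ) : ℂ)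
      = ∑ g ∈ F, ∑ h ∈ F, (conj (β g) * β h * (g.norm : ℂ)
          + conj (β g) * β h * (h.norm : ℂ)
          - 2 * (conj (β g) * β h * ((prefs g.toWord ∩ prefs h.toWord).card : ℂ))) := by
        refine Finset.sum_congr rfl fun g hg => Finset.sum_congr rfl fun h hh => ?_
        rw [hkey g hg h hh]; ring
    _ = (∑ g ∈ F, ∑ h ∈ F, conj (β g) * β h * (g.norm : ℂ))
          + (∑ g ∈ F, ∑ h ∈ F, conj (β g) * β h * (h.norm : ℂ))
          - 2 * ∑ g ∈ F, ∑ h ∈ F,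
              conj (β g) * β h * ((prefs g.toWord ∩ prefs h.toWord).card : ℂ) := by
        simp only [Finset.sum_sub_distrib, Finset.sum_add_distrib, Finset.mul_sum]
    _ = 0 + 0 - 2 * ∑ g ∈ F, ∑ h ∈ F,
          conj (β g) * β h * ((prefs g.toWord ∩ prefs h.toWord).card : ℂ) := by
        congr 1
        congr 1
        · calc ∑ g ∈ F, ∑ h ∈ F, conj (β g) * β h * (g.norm : ℂ)
              = ∑ g ∈ F, (∑ h ∈ F, β h) * (conj (β g) * (g.norm : ℂ)) := by
                refine Finset.sum_congr rfl fun g _ => ?_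
                rw [Finset.sum_mul]
                exact Finset.sum_congr rfl fun h _ => by ring
            _ = 0 := by rw [hsum]; simp
        · calc ∑ g ∈ F, ∑ h ∈ F, conj (β g) * β h * (h.norm : ℂ)
              = ∑ g ∈ F, conj (β g) * (∑ h ∈ F, β h * (h.norm : ℂ)) := by
                refine Finset.sum_congr rfl fun g _ => ?_
                rw [Finset.mul_sum]
                exact Finset.sum_congr rfl fun h _ => by ring
            _ = (∑ g ∈ F, conj (β g)) * (∑ h ∈ F, β h * (h.norm : ℂ)) := by
                rw [Finset.sum_mul]
            _ = 0 := by rw [hconjsum, zero_mul]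
    _ = -2 * ∑ g ∈ F, ∑ h ∈ F,
          conj (β g) * β h * ((prefs g.toWord ∩ prefs h.toWord).card : ℂ) := by ring
    _ = -2 * ∑ w ∈ W, conj (A w) * A w := by
        congr 1
        calc ∑ g ∈ F, ∑ h ∈ F,
              conj (β g) * β h * ((prefs g.toWord ∩ prefs h.toWord).card : ℂ)
            = ∑ g ∈ F, ∑ h ∈ F, ∑ w ∈ W,
                (conj (β g) * (if w ∈ prefs g.toWord then (1:ℂ) else 0)) *
                  (β h * (if w ∈ prefs h.toWord then (1:ℂ) else 0)) := by
              refine Finset.sum_congr rfl fun g hg => Finset.sum_congr rfl fun h hh => ?_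
              rw [hcard g hg h hh, Finset.mul_sum]
              exact Finset.sum_congr rfl fun w _ => by ring
          _ = ∑ g ∈ F, ∑ w ∈ W, ∑ h ∈ F,
                (conj (β g) * (if w ∈ prefs g.toWord then (1:ℂ) else 0)) *
                  (β h * (if w ∈ prefs h.toWord then (1:ℂ) else 0)) :=
              Finset.sum_congr rfl fun g _ => Finset.sum_comm
          _ = ∑ w ∈ W, ∑ g ∈ F, ∑ h ∈ F,
                (conj (β g) * (if w ∈ prefs g.toWord then (1:ℂ) else 0)) *
                  (β h * (if w ∈ prefs h.toWord then (1:ℂ) else 0)) :=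
              Finset.sum_comm
          _ = ∑ w ∈ W, conj (A w) * A w := by
              refine Finset.sum_congr rfl fun w _ => ?_
              rw [← Finset.sum_mul_sum]
              congr 1
              · rw [hA, map_sum]
                refine Finset.sum_congr rfl fun g _ => ?_
                by_cases h1 : w ∈ prefs g.toWord <;> simp [h1]
              · refine Finset.sum_congr rfl fun h _ => ?_
                by_cases h1 : w ∈ prefs h.toWord <;> simp [h1]
    _ = ((-2 * ∑ w ∈ W, Complex.normSq (A w) : ℝ) : ℂ) := by
        push_cast
        congr 1
        refine Finset.sum_congr rfl fun w _ => ?_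
        rw [mul_comm, Complex.mul_conj]
end

section
/- Let n ≥ 1, t > 0, and let f : ℝⁿ → ℂ be integrable. Then for every x ∈ ℝⁿ, (4πt)^{−n/2} ∫_{ℝⁿ} exp(−|x−y|²/(4t)) f(y) dy = Γ(n/2 + 1)^{−1} ∫₀^∞ e^{−u} u^{n/2} ( 1/vol(B(x, √(4ut))) ∫_{B(x,√(4ut))} f(y) dy ) du; that is, the heat semigroup on ℝⁿ is an average of mean value operators over Euclidean balls. -/
open MeasureTheory Real

/-- The heat semigroup on `ℝⁿ` is an average of mean value operators over Euclidean
balls: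
`(4πt)^{-n/2} ∫ e^{-|x-y|²/(4t)} f(y) dy
  = Γ(n/2+1)⁻¹ ∫₀^∞ e^{-u} u^{n/2} (mean of f over B(x, √(4ut))) du`. -/
theorem heat_semigroup_eq_average_of_ball_means (n : ℕ) (hn : 1 ≤ n) (t : ℝ) (ht : 0 < t)
    (f : EuclideanSpace ℝ (Fin n) → ℂ) (hf : Integrable f) (x : EuclideanSpace ℝ (Fin n)) :
    ((4 * π * t) ^ (-(n : ℝ) / 2)) •
        ∫ y, Real.exp (-‖x - y‖ ^ 2 / (4 * t)) • f y =
      (Real.Gamma ((n : ℝ) / 2 + 1))⁻¹ •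
        ∫ u in Set.Ioi (0 : ℝ),
          (Real.exp (-u) * u ^ ((n : ℝ) / 2)) •
            (((volume (Metric.ball x (Real.sqrt (4 * u * t)))).toReal)⁻¹ •
              ∫ y in Metric.ball x (Real.sqrt (4 * u * t)), f y) := by
  have : Nonempty (Fin n) := ⟨⟨0, hn⟩⟩
  set a : EuclideanSpace ℝ (Fin n) → ℝ := fun y => ‖x - y‖ ^ 2 / (4 * t) with ha
  have ha_cont : Continuous a := by
    fun_prop
  have ha_nonneg : ∀ y, 0 ≤ a y := fun y =>
    div_nonneg (sq_nonneg _) (by linarith)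
  have ht4 : (0:ℝ) < 4 * t := by linarith
  -- the ball equals a sublevel set of `a`
  have hball : ∀ u : ℝ, 0 < u →
      Metric.ball x (Real.sqrt (4 * u * t)) = {y : EuclideanSpace ℝ (Fin n) | a y < u} := by
    intro u hu
    ext y
    have h4ut : 0 < 4 * u * t := by positivity
    simp only [Metric.mem_ball, Set.mem_setOf_eq, ha, dist_comm, dist_eq_norm]
    rw [Real.lt_sqrt (norm_nonneg _), div_lt_iff₀ ht4]
    constructor <;> intro h <;> nlinarith
  -- the product-set indicator function
  set g : ℝ × EuclideanSpace ℝ (Fin n) → ℂ := fun p =>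
    Set.indicator {p : ℝ × EuclideanSpace ℝ (Fin n) | a p.2 < p.1} (fun p => Real.exp (-p.1) • f p.2) p with hg
  have hmeas_set : MeasurableSet {p : ℝ × EuclideanSpace ℝ (Fin n) | a p.2 < p.1} := by
    exact measurableSet_lt (ha_cont.comp continuous_snd).measurable measurable_fst
  have hg_int : Integrable g ((volume.restrict (Set.Ioi (0:ℝ))).prod volume) := by
    have hmeas : AEStronglyMeasurable (fun p : ℝ × EuclideanSpace ℝ (Fin n) => Real.exp (-p.1) • f p.2)
        ((volume.restrict (Set.Ioi (0:ℝ))).prod volume) := by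
      have hm2 : AEStronglyMeasurable (fun p : ℝ × EuclideanSpace ℝ (Fin n) => f p.2)
          ((volume.restrict (Set.Ioi (0:ℝ))).prod volume) := hf.1.comp_snd
      exact (((continuous_exp.comp continuous_neg).comp
        continuous_fst).aestronglyMeasurable).smul hm2
    have hbound : Integrable (fun p : ℝ × EuclideanSpace ℝ (Fin n) => Real.exp (-p.1) * ‖f p.2‖)
        ((volume.restrict (Set.Ioi (0:ℝ))).prod volume) := by
      have he : IntegrableOn (fun u : ℝ => Real.exp (-u)) (Set.Ioi (0:ℝ)) := by
        simpa using exp_neg_integrableOn_Ioi (0:ℝ) one_pos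
      exact he.mul_prod hf.norm
    refine Integrable.mono' hbound (hmeas.indicator hmeas_set) ?_
    refine Filter.Eventually.of_forall fun p => ?_
    rw [hg]
    calc ‖Set.indicator {p : ℝ × EuclideanSpace ℝ (Fin n) | a p.2 < p.1} (fun p => Real.exp (-p.1) • f p.2) p‖
        ≤ ‖Real.exp (-p.1) • f p.2‖ := by
          exact norm_indicator_le_norm_self _ _
      _ = Real.exp (-p.1) * ‖f p.2‖ := by
          rw [norm_smul, Real.norm_eq_abs, abs_of_pos (Real.exp_pos _)]
  -- the core identity via Fubini
  have key : (∫ u in Set.Ioi (0:ℝ),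
        Real.exp (-u) • ∫ y in Metric.ball x (Real.sqrt (4 * u * t)), f y)
      = ∫ y, Real.exp (-(a y)) • f y := by
    have h1 : (∫ u in Set.Ioi (0:ℝ),
          Real.exp (-u) • ∫ y in Metric.ball x (Real.sqrt (4 * u * t)), f y)
        = ∫ u in Set.Ioi (0:ℝ), ∫ y, g (u, y) := by
      refine setIntegral_congr_fun measurableSet_Ioi fun u hu => ?_
      have hu' : 0 < u := hu
      have : ∀ y : EuclideanSpace ℝ (Fin n), g (u, y)
          = Set.indicator {y : EuclideanSpace ℝ (Fin n) | a y < u} (fun y => Real.exp (-u) • f y) y := by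
        intro y
        simp [hg, Set.indicator_apply]
      simp_rw [this]
      rw [integral_indicator (by
          exact measurableSet_lt ha_cont.measurable measurable_const),
        ← hball u hu', integral_smul]
    have h2 : ∀ y : EuclideanSpace ℝ (Fin n), (∫ u in Set.Ioi (0:ℝ), g (u, y)) = Real.exp (-(a y)) • f y := by
      intro y
      have : ∀ u : ℝ, g (u, y)
          = Set.indicator (Set.Ioi (a y)) (fun u => Real.exp (-u) • f y) u := by
        intro u
        simp [hg, Set.indicator_apply, Set.mem_Ioi]
      simp_rw [this]
      rw [integral_indicator measurableSet_Ioi, Measure.restrict_restrict measurableSet_Ioi,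
        Set.Ioi_inter_Ioi, max_eq_left (ha_nonneg y), integral_smul_const,
        integral_exp_neg_Ioi]
    rw [h1, integral_integral_swap hg_int]
    exact integral_congr_ae (Filter.Eventually.of_forall h2)
  -- positivity facts
  have hΓ : 0 < Real.Gamma ((n : ℝ) / 2 + 1) := Real.Gamma_pos_of_pos (by positivity)
  have hπ : (0:ℝ) < π := Real.pi_pos
  -- simplify the right-hand side integrand
  have hRHS : ∀ u ∈ Set.Ioi (0:ℝ),
      (Real.exp (-u) * u ^ ((n : ℝ) / 2)) •
          (((volume (Metric.ball x (Real.sqrt (4 * u * t)))).toReal)⁻¹ •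
            ∫ y in Metric.ball x (Real.sqrt (4 * u * t)), f y)
        = (Real.Gamma ((n : ℝ) / 2 + 1) * (4 * π * t) ^ (-(n:ℝ) / 2)) •
            (Real.exp (-u) • ∫ y in Metric.ball x (Real.sqrt (4 * u * t)), f y) := by
    intro u hu
    have hu' : 0 < u := hu
    have h4ut : (0:ℝ) < 4 * u * t := by positivity
    have hvol : (volume (Metric.ball x (Real.sqrt (4 * u * t)))).toReal
        = (4 * u * t) ^ ((n:ℝ)/2) * (π ^ ((n:ℝ)/2) / Real.Gamma ((n : ℝ) / 2 + 1)) := by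
      rw [EuclideanSpace.volume_ball, Fintype.card_fin, ENNReal.toReal_mul, ENNReal.toReal_pow,
        ENNReal.toReal_ofReal (Real.sqrt_nonneg _), ENNReal.toReal_ofReal (by positivity)]
      rw [← Real.rpow_natCast (Real.sqrt (4*u*t)) n, ← Real.rpow_natCast (Real.sqrt π) n,
        Real.rpow_natCast, Real.rpow_natCast,
        ← Real.rpow_natCast (Real.sqrt (4*u*t)) n, ← Real.rpow_natCast (Real.sqrt π) n,
        Real.sqrt_eq_rpow, Real.sqrt_eq_rpow, ← Real.rpow_mul h4ut.le, ← Real.rpow_mul hπ.le]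
      ring_nf
    rw [smul_smul, smul_smul]
    congr 1
    rw [hvol]
    have e1 : (4 * u * t) ^ ((n:ℝ)/2) = u ^ ((n:ℝ)/2) * (4 * t) ^ ((n:ℝ)/2) := by
      rw [show (4:ℝ) * u * t = u * (4 * t) by ring, Real.mul_rpow hu'.le ht4.le]
    have e2 : (4 * π * t) ^ (-(n:ℝ)/2) = ((4 * t) ^ ((n:ℝ)/2) * π ^ ((n:ℝ)/2))⁻¹ := by
      rw [show (4:ℝ) * π * t = (4 * t) * π by ring, ← Real.mul_rpow ht4.le hπ.le,
        show (-(n:ℝ)/2) = -((n:ℝ)/2) by ring, Real.rpow_neg (by positivity)]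
    rw [e1, e2]
    have hu2 : u ^ ((n:ℝ)/2) ≠ 0 := (Real.rpow_pos_of_pos hu' _).ne'
    have h4t2 : (4 * t : ℝ) ^ ((n:ℝ)/2) ≠ 0 := (Real.rpow_pos_of_pos ht4 _).ne'
    have hπ2 : (π : ℝ) ^ ((n:ℝ)/2) ≠ 0 := (Real.rpow_pos_of_pos hπ _).ne'
    field_simp
  rw [setIntegral_congr_fun measurableSet_Ioi hRHS, integral_smul, smul_smul,
    ← mul_assoc, inv_mul_cancel₀ hΓ.ne', one_mul, key]
  congr 1
  refine integral_congr_ae (Filter.Eventually.of_forall fun y => ?_)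
  rw [ha]
  simp [neg_div]
end

section
/- For every n ≥ 1, the matrix A_n ∈ M_n(ℂ) with entries (A_n)_{ii} = 0 and (A_n)_{ij} = 1/(i−j) for i ≠ j satisfies ‖A_n‖_∞ ≤ π, where ‖·‖_∞ is the operator norm on ℓ₂(n). -/
open Complex MeasureTheory intervalIntegral Real Finset

/-- The Hilbert matrix `A_n` with zero diagonal and entries `1/(i-j)` off the diagonal. -/
noncomputable def hilbertMatrix (n : ℕ) : Matrix (Fin n) (Fin n) ℂ :=
  fun i j => if i = j then 0 else (((i : ℤ) - (j : ℤ) : ℤ) : ℂ)⁻¹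

noncomputable def ee (k : ℤ) (t : ℝ) : ℂ := Complex.exp (2 * Real.pi * Complex.I * k * t)

lemma ee_cont (k : ℤ) : Continuous (ee k) := by
  unfold ee; fun_prop

lemma exp_two_pi_I_int (k : ℤ) : Complex.exp (2 * Real.pi * Complex.I * k) = 1 := by
  rw [show (2 * Real.pi * Complex.I * k : ℂ) = (k : ℤ) * (2 * Real.pi * Complex.I) by
    push_cast; ring]
  exact Complex.exp_int_mul_two_pi_mul_I k

lemma ee_int (k : ℤ) : ∫ t in (0:ℝ)..1, ee k t = if k = 0 then 1 else 0 := by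
  unfold ee
  split_ifs with h
  · simp [h]
  · have hc : (2 * Real.pi * Complex.I * k : ℂ) ≠ 0 := by
      simp [Real.pi_ne_zero, Complex.I_ne_zero, h]
    rw [integral_exp_mul_complex hc]
    simp [exp_two_pi_I_int k]

lemma t_exp_deriv (c : ℂ) (hc : c ≠ 0) (t : ℝ) :
    HasDerivAt (fun s : ℝ => ((s : ℂ)/c - 1/c^2) * Complex.exp (c * s))
      ((t : ℂ) * Complex.exp (c * t)) t := by
  have hid : HasDerivAt (fun s : ℝ => (s : ℂ)) 1 t := (hasDerivAt_id t).ofReal_comp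
  have h1 : HasDerivAt (fun s : ℝ => ((s : ℂ)/c - 1/c^2)) (1/c) t := by
    exact (hid.div_const c).sub_const (1/c^2)
  have h2 : HasDerivAt (fun s : ℝ => Complex.exp (c * s)) (c * Complex.exp (c * t)) t := by
    have : HasDerivAt (fun s : ℝ => c * (s : ℂ)) c t := by simpa using hid.const_mul c
    simpa [mul_comm] using this.cexp
  have := h1.mul h2
  convert this using 1
  · rfl
  · rfl
  field_simp
  ring

lemma te_int (k : ℤ) (hk : k ≠ 0) :
    ∫ t in (0:ℝ)..1, (t : ℂ) * ee k t = 1 / (2 * Real.pi * Complex.I * k) := by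
  set c : ℂ := 2 * Real.pi * Complex.I * k with hcdef
  have hc : c ≠ 0 := by simp [hcdef, Real.pi_ne_zero, Complex.I_ne_zero, hk]
  have key := intervalIntegral.integral_eq_sub_of_hasDerivAt
    (f := fun s : ℝ => ((s : ℂ)/c - 1/c^2) * Complex.exp (c * s))
    (f' := fun s : ℝ => (s : ℂ) * Complex.exp (c * s)) (a := 0) (b := 1)
    (fun t _ => t_exp_deriv c hc t)
    (by apply Continuous.intervalIntegrable; fun_prop)
  unfold ee
  rw [show (fun t : ℝ => (t:ℂ) * Complex.exp (2 * Real.pi * Complex.I * k * t)) =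
    (fun s : ℝ => (s : ℂ) * Complex.exp (c * s)) from rfl, key]
  have h1 : Complex.exp c = 1 := by rw [hcdef]; exact exp_two_pi_I_int k
  simp only [Complex.ofReal_zero, Complex.ofReal_one, mul_one, mul_zero, Complex.exp_zero, h1]
  field_simp
  ring

noncomputable def gg (t : ℝ) : ℂ := Complex.I * ((Real.pi : ℂ) - 2 * Real.pi * t)

lemma gg_cont : Continuous gg := by unfold gg; fun_prop

lemma gg_norm_le {t : ℝ} (ht : t ∈ Set.Icc (0:ℝ) 1) : ‖gg t‖ ≤ Real.pi := by
  unfold gg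
  rw [norm_mul, Complex.norm_I, one_mul]
  have : ((Real.pi : ℂ) - 2 * Real.pi * t) = ((Real.pi - 2 * Real.pi * t : ℝ) : ℂ) := by
    push_cast; ring
  rw [this, Complex.norm_real, Real.norm_eq_abs, abs_le]
  obtain ⟨h0, h1⟩ := ht
  constructor <;> nlinarith [Real.pi_pos]

lemma gg_int (k : ℤ) :
    ∫ t in (0:ℝ)..1, gg t * ee k t = if k = 0 then 0 else -((k : ℂ))⁻¹ := by
  have heq : ∀ t : ℝ, gg t * ee k t
      = (Complex.I * Real.pi) * ee k t - (2 * Real.pi * Complex.I) * ((t:ℂ) * ee k t) := by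
    intro t; unfold gg; ring
  simp only [heq]
  rw [intervalIntegral.integral_sub, intervalIntegral.integral_const_mul,
    intervalIntegral.integral_const_mul, ee_int]
  · split_ifs with h
    · subst h
      have h2 : ∫ t in (0:ℝ)..1, (t:ℂ) * ee 0 t = 1/2 := by
        have : ∀ t : ℝ, (t:ℂ) * ee 0 t = ((t : ℝ) : ℂ) := by
          intro t; unfold ee; simp
        simp only [this]
        rw [intervalIntegral.integral_ofReal, integral_id]
        norm_num
      rw [h2]; ring
    · rw [te_int k h]
      have hk0 : (k:ℂ) ≠ 0 := Int.cast_ne_zero.mpr h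
      have hc : (2 * Real.pi * Complex.I * k : ℂ) ≠ 0 := by
        simp [Real.pi_ne_zero, Complex.I_ne_zero, h]
      field_simp
      ring
  · apply Continuous.intervalIntegrable
    exact continuous_const.mul (ee_cont k)
  · apply Continuous.intervalIntegrable
    exact continuous_const.mul (Complex.continuous_ofReal.mul (ee_cont k))

lemma ee_mul (a b : ℤ) (t : ℝ) : ee a t * ee b t = ee (a+b) t := by
  unfold ee
  rw [← Complex.exp_add]
  congr 1
  push_cast
  ring

lemma conj_ee (k : ℤ) (t : ℝ) : (starRingEnd ℂ) (ee k t) = ee (-k) t := by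
  unfold ee
  rw [← Complex.exp_conj]
  congr 1
  push_cast
  simp only [map_mul, Complex.conj_I, Complex.conj_ofReal, map_ofNat, map_intCast]
  push_cast
  ring

lemma hilbert_eq (n : ℕ) (i j : Fin n) :
    hilbertMatrix n i j =
      (if ((j:ℤ) - (i:ℤ)) = 0 then 0 else -((((j:ℤ) - (i:ℤ) : ℤ) : ℂ))⁻¹) := by
  unfold hilbertMatrix
  have hiff : i = j ↔ ((j:ℤ) - (i:ℤ)) = 0 := by omega
  by_cases h : i = j
  · simp [h, hiff.mp h]
  · rw [if_neg h, if_neg (fun hc => h (hiff.mpr hc))]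
    rw [show ((i:ℤ) - (j:ℤ) : ℤ) = -((j:ℤ) - (i:ℤ)) by ring]
    push_cast
    rw [inv_neg]

lemma bilinear (n : ℕ) (x y : Fin n → ℂ) :
    ∑ i, ∑ j, hilbertMatrix n i j * x j * (starRingEnd ℂ) (y i)
    = ∫ t in (0:ℝ)..1, gg t * (∑ j, x j * ee j t) * (starRingEnd ℂ) (∑ i, y i * ee i t) := by
  have hint : ∀ t : ℝ, gg t * (∑ j, x j * ee j t) * (starRingEnd ℂ) (∑ i, y i * ee i t)
      = ∑ i, ∑ j, (x j * (starRingEnd ℂ) (y i)) * (gg t * ee ((j:ℤ) - (i:ℤ)) t) := by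
    intro t
    rw [map_sum, Finset.mul_sum]
    congr 1; funext i
    rw [Finset.mul_sum, Finset.sum_mul]
    · congr 1; funext j
      rw [map_mul, conj_ee, sub_eq_add_neg, ← ee_mul]
      ring
  simp only [hint]
  rw [intervalIntegral.integral_finset_sum
    (f := fun i t => ∑ j, x j * (starRingEnd ℂ) (y i) * (gg t * ee ((j:ℤ) - (i:ℤ)) t))
    (fun i _ => Continuous.intervalIntegrable
    (continuous_finset_sum _ (fun j _ => continuous_const.mul ((gg_cont).mul (ee_cont _)))) _ _)]
  refine Finset.sum_congr rfl (fun i _ => ?_)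
  rw [intervalIntegral.integral_finset_sum
    (f := fun j t => x j * (starRingEnd ℂ) (y i) * (gg t * ee ((j:ℤ) - (i:ℤ)) t))
    (fun j _ => Continuous.intervalIntegrable
    (continuous_const.mul ((gg_cont).mul (ee_cont _))) _ _)]
  refine Finset.sum_congr rfl (fun j _ => ?_)
  rw [intervalIntegral.integral_const_mul, gg_int, hilbert_eq]
  ring

lemma F_cont (n : ℕ) (x : Fin n → ℂ) : Continuous (fun t : ℝ => ∑ j, x j * ee (j:ℤ) t) :=
  continuous_finset_sum _ (fun j _ => continuous_const.mul (ee_cont _))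

lemma parseval (n : ℕ) (x : Fin n → ℂ) :
    ∫ t in (0:ℝ)..1, ‖∑ j, x j * ee (j:ℤ) t‖^2 = ∑ j, ‖x j‖^2 := by
  set F : ℝ → ℂ := fun t => ∑ j, x j * ee (j:ℤ) t with hF
  have hFc : Continuous F := F_cont n x
  have hC : ∫ t in (0:ℝ)..1, (F t * (starRingEnd ℂ) (F t))
      = ((∑ j, ‖x j‖^2 : ℝ) : ℂ) := by
    have hint : ∀ t : ℝ, F t * (starRingEnd ℂ) (F t)
        = ∑ j, ∑ k, (x k * (starRingEnd ℂ) (x j)) * ee ((k:ℤ) - (j:ℤ)) t := by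
      intro t
      rw [hF]
      simp only [map_sum, map_mul, conj_ee, Finset.sum_mul, Finset.mul_sum]
      refine Finset.sum_congr rfl (fun j _ => Finset.sum_congr rfl (fun k _ => ?_))
      rw [sub_eq_add_neg, ← ee_mul]
      ring
    simp only [hint]
    rw [intervalIntegral.integral_finset_sum
      (f := fun j t => ∑ k, x k * (starRingEnd ℂ) (x j) * ee ((k:ℤ) - (j:ℤ)) t)
      (fun j _ => Continuous.intervalIntegrable
      (continuous_finset_sum _ (fun k _ => continuous_const.mul (ee_cont _))) _ _)]
    have : ∀ j : Fin n, (∫ t in (0:ℝ)..1, ∑ k, (x k * (starRingEnd ℂ) (x j)) * ee ((k:ℤ) - (j:ℤ)) t)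
        = ((‖x j‖^2 : ℝ) : ℂ) := by
      intro j
      rw [intervalIntegral.integral_finset_sum
        (f := fun k t => x k * (starRingEnd ℂ) (x j) * ee ((k:ℤ) - (j:ℤ)) t)
        (fun k _ => Continuous.intervalIntegrable
        (continuous_const.mul (ee_cont _)) _ _)]
      have hterm : ∀ k : Fin n, (∫ t in (0:ℝ)..1, (x k * (starRingEnd ℂ) (x j)) * ee ((k:ℤ) - (j:ℤ)) t)
          = if k = j then ((‖x j‖^2 : ℝ) : ℂ) else 0 := by
        intro k
        rw [intervalIntegral.integral_const_mul, ee_int]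
        by_cases h : k = j
        · subst h
          rw [sub_self, if_pos rfl, if_pos rfl, mul_one, Complex.mul_conj,
            Complex.normSq_eq_norm_sq]
        · have hne : ((k:ℤ) - (j:ℤ)) ≠ 0 := by
            intro hc
            exact h (by omega)
          rw [if_neg hne, mul_zero, if_neg h]
      simp only [hterm]
      rw [Finset.sum_ite_eq' Finset.univ j (fun _ => ((‖x j‖^2 : ℝ) : ℂ))]
      simp
    simp only [this]
    push_cast
    ring
  have hre : ∀ t : ℝ, ‖F t‖^2 = (F t * (starRingEnd ℂ) (F t)).re := by
    intro t
    rw [Complex.mul_conj, Complex.ofReal_re, Complex.normSq_eq_norm_sq]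
  calc ∫ t in (0:ℝ)..1, ‖F t‖^2 = ∫ t in (0:ℝ)..1, Complex.reCLM (F t * (starRingEnd ℂ) (F t)) := by
        simp only [hre]; rfl
    _ = Complex.reCLM (∫ t in (0:ℝ)..1, F t * (starRingEnd ℂ) (F t)) := by
        rw [ContinuousLinearMap.intervalIntegral_comp_comm]
        exact Continuous.intervalIntegrable (hFc.mul (Complex.continuous_conj.comp hFc)) _ _
    _ = ∑ j, ‖x j‖^2 := by
        rw [hC]; exact Complex.ofReal_re _

lemma amgm {a b c : ℝ} (ha : 0 ≤ a) (hb : 0 ≤ b) (hc : 0 < c) :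
    a * b ≤ (c * a^2 + b^2/c)/2 := by
  have h : (c * a^2 + b^2/c)/2 - a*b = (c*a - b)^2/(2*c) := by
    field_simp
    ring
  nlinarith [sq_nonneg (c*a - b), div_nonneg (sq_nonneg (c*a-b)) (le_of_lt (by linarith : (0:ℝ) < 2*c))]

lemma bilinear_bound (n : ℕ) (x y : Fin n → ℂ) {c : ℝ} (hc : 0 < c) :
    ‖∑ i, ∑ j, hilbertMatrix n i j * x j * (starRingEnd ℂ) (y i)‖
      ≤ Real.pi/2 * (c * ∑ j, ‖x j‖^2 + (∑ i, ‖y i‖^2)/c) := by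
  rw [bilinear]
  have hFc := F_cont n x
  have hGc := F_cont n y
  calc ‖∫ t in (0:ℝ)..1, gg t * (∑ j, x j * ee (j:ℤ) t) * (starRingEnd ℂ) (∑ i, y i * ee (i:ℤ) t)‖
      ≤ ∫ t in (0:ℝ)..1, ‖gg t * (∑ j, x j * ee (j:ℤ) t) * (starRingEnd ℂ) (∑ i, y i * ee (i:ℤ) t)‖ :=
        intervalIntegral.norm_integral_le_integral_norm zero_le_one
    _ ≤ ∫ t in (0:ℝ)..1, Real.pi/2 * (c * ‖∑ j, x j * ee (j:ℤ) t‖^2 + ‖∑ i, y i * ee (i:ℤ) t‖^2/c) := by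
        apply intervalIntegral.integral_mono_on zero_le_one
        · exact Continuous.intervalIntegrable
            (((gg_cont.mul hFc).mul (Complex.continuous_conj.comp hGc)).norm) _ _
        · exact Continuous.intervalIntegrable
            (continuous_const.mul (((continuous_const.mul ((hFc.norm).pow 2)).add
              (((hGc.norm).pow 2).div_const c)))) _ _
        · intro t ht
          rw [norm_mul, norm_mul]
          have h1 : ‖(starRingEnd ℂ) (∑ i, y i * ee (i:ℤ) t)‖ = ‖∑ i, y i * ee (i:ℤ) t‖ :=
            RCLike.norm_conj _
          rw [h1]
          calc ‖gg t‖ * ‖∑ j, x j * ee (j:ℤ) t‖ * ‖∑ i, y i * ee (i:ℤ) t‖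
              ≤ Real.pi * (‖∑ j, x j * ee (j:ℤ) t‖ * ‖∑ i, y i * ee (i:ℤ) t‖) := by
                rw [mul_assoc]
                apply mul_le_mul_of_nonneg_right (gg_norm_le ht)
                positivity
            _ ≤ Real.pi * ((c * ‖∑ j, x j * ee (j:ℤ) t‖^2 + ‖∑ i, y i * ee (i:ℤ) t‖^2/c)/2) := by
                apply mul_le_mul_of_nonneg_left (amgm (norm_nonneg _) (norm_nonneg _) hc)
                  Real.pi_pos.le
            _ = Real.pi/2 * (c * ‖∑ j, x j * ee (j:ℤ) t‖^2 + ‖∑ i, y i * ee (i:ℤ) t‖^2/c) := by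
                ring
    _ = Real.pi/2 * (c * ∑ j, ‖x j‖^2 + (∑ i, ‖y i‖^2)/c) := by
        rw [intervalIntegral.integral_const_mul]
        congr 1
        rw [intervalIntegral.integral_add
          (f := fun t => c * ‖∑ j, x j * ee (j:ℤ) t‖^2) (g := fun t => ‖∑ i, y i * ee (i:ℤ) t‖^2/c)
          (Continuous.intervalIntegrable (continuous_const.mul ((hFc.norm).pow 2)) _ _)
          (Continuous.intervalIntegrable (((hGc.norm).pow 2).div_const c) _ _),
          intervalIntegral.integral_const_mul, intervalIntegral.integral_div,
          parseval, parseval]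

/-- Hilbert's inequality: the operator norm of the Hilbert matrix is at most `π`. -/
theorem hilbertMatrix_opNorm_le_pi (n : ℕ) (hn : 1 ≤ n) :
    opNorm (hilbertMatrix n) ≤ Real.pi := by
  unfold opNorm
  apply ContinuousLinearMap.opNorm_le_bound _ Real.pi_pos.le
  intro v
  set T := Matrix.toEuclideanCLM (𝕜 := ℂ) (hilbertMatrix n) with hT
  set w : Fin n → ℂ := fun i => ∑ j, hilbertMatrix n i j * v j with hw
  have hTv : ∀ i, T v i = w i := by
    intro i
    have h := Matrix.ofLp_toEuclideanCLM (𝕜 := ℂ) (hilbertMatrix n) v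
    have h2 : T v i = (WithLp.equiv 2 (Fin n → ℂ) (T v)) i := rfl
    rw [hT, h]
    simp [Matrix.toLin'_apply, Matrix.mulVec, dotProduct, hw]
  set A := ∑ j, ‖v j‖^2 with hA
  set B := ∑ i, ‖w i‖^2 with hB
  have hA0 : 0 ≤ A := Finset.sum_nonneg (fun j _ => sq_nonneg _)
  have hB0 : 0 ≤ B := Finset.sum_nonneg (fun i _ => sq_nonneg _)
  have hnormv : ‖v‖ = Real.sqrt A := by
    rw [EuclideanSpace.norm_eq]
  have hnormTv : ‖T v‖ = Real.sqrt B := by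
    rw [EuclideanSpace.norm_eq]
    congr 1
  -- the key inequality
  have hkey : ∀ c : ℝ, 0 < c → B ≤ Real.pi/2 * (c * A + B/c) := by
    intro c hc
    have hS : ∑ i, ∑ j, hilbertMatrix n i j * (fun j => v j) j * (starRingEnd ℂ) (w i)
        = ((B : ℝ) : ℂ) := by
      have : ∀ i : Fin n, ∑ j, hilbertMatrix n i j * v j * (starRingEnd ℂ) (w i)
          = ((‖w i‖^2 : ℝ) : ℂ) := by
        intro i
        rw [← Finset.sum_mul,
          show (∑ j, hilbertMatrix n i j * v j) = w i from rfl,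
          Complex.mul_conj, Complex.normSq_eq_norm_sq]
      simp only [this, hB]
      push_cast
      ring
    have hb := bilinear_bound n (fun j => v j) w hc
    rw [hS] at hb
    have : ‖((B:ℝ):ℂ)‖ = B := by
      rw [Complex.norm_real, Real.norm_eq_abs, _root_.abs_of_nonneg hB0]
    rw [this] at hb
    exact hb
  rw [hnormv, hnormTv]
  -- now pure real analysis
  by_cases hBz : B = 0
  · rw [hBz, Real.sqrt_zero]
    exact mul_nonneg Real.pi_pos.le (Real.sqrt_nonneg _)
  · have hBpos : 0 < B := lt_of_le_of_ne hB0 (Ne.symm hBz)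
    by_cases hAz : A = 0
    · exfalso
      have := hkey Real.pi Real.pi_pos
      rw [hAz, mul_zero, zero_add] at this
      have h2 : Real.pi/2 * (B/Real.pi) = B/2 := by
        field_simp
      rw [h2] at this
      linarith
    · have hApos : 0 < A := lt_of_le_of_ne hA0 (Ne.symm hAz)
      set sa := Real.sqrt A with hsa
      set sb := Real.sqrt B with hsb
      have hsa0 : 0 < sa := Real.sqrt_pos.mpr hApos
      have hsb0 : 0 < sb := Real.sqrt_pos.mpr hBpos
      have hc : 0 < sb/sa := div_pos hsb0 hsa0
      have hk := hkey (sb/sa) hc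
      have hA' : sa^2 = A := Real.sq_sqrt hA0
      have hB' : sb^2 = B := Real.sq_sqrt hB0
      have e1 : (sb/sa) * A + B/(sb/sa) = 2 * (sa * sb) := by
        rw [← hA', ← hB']
        field_simp
        ring
      rw [e1] at hk
      have hk2 : sb^2 ≤ Real.pi * (sa * sb) := by
        rw [hB']
        linarith
      have := mul_le_mul_of_nonneg_right (le_of_eq (rfl : sb = sb)) (le_of_lt hsb0)
      nlinarith [hsb0, hsa0]
end

section
/- Let A_n ∈ M_n(ℂ) have entries (A_n)_{ii} = 0 and (A_n)_{ij} = 1/(i−j) for i ≠ j, and let T(A_n) be its triangular transform, with entries sgn(i−j)/(i−j) = 1/|i−j| for i ≠ j and 0 on the diagonal. Then there exist constants c, C > 0, independent of n, such that for all n ≥ 2, c · log n ≤ ‖T(A_n)‖_∞ ≤ C · log n. -/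
/-- The triangular transform of the Hilbert matrix: zero diagonal and entries
`sgn(i-j)/(i-j) = 1/|i-j|` off the diagonal. -/
noncomputable def triangularHilbertMatrix (n : ℕ) : Matrix (Fin n) (Fin n) ℂ :=
  fun i j => if i = j then 0 else (((|(i : ℤ) - (j : ℤ)| : ℤ) : ℂ))⁻¹

/-! ### Auxiliary lemmas -/

/-- Real-valued harmonic number. -/
noncomputable def KP.H (m : ℕ) : ℝ := ∑ k ∈ Finset.range m, ((k : ℝ) + 1)⁻¹

namespace KP

lemma H_nonneg (m : ℕ) : 0 ≤ H m := Finset.sum_nonneg fun k _ => by positivity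

lemma H_mono : Monotone H := monotone_nat_of_le_succ fun m => by
  rw [H, H, Finset.sum_range_succ]
  have : (0:ℝ) ≤ ((m:ℝ)+1)⁻¹ := by positivity
  linarith

lemma H_eq_harmonic (m : ℕ) : H m = ((harmonic m : ℚ) : ℝ) := by
  rw [H, harmonic]
  push_cast
  rfl

lemma H_le (m : ℕ) : H m ≤ 1 + Real.log m := by
  rw [H_eq_harmonic]; exact harmonic_le_one_add_log m

lemma le_H (m : ℕ) : Real.log (m + 1) ≤ H m := by
  rw [H_eq_harmonic]
  exact_mod_cast log_add_one_le_harmonic m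

lemma thm_norm_entry (n : ℕ) (i j : Fin n) :
    ‖triangularHilbertMatrix n i j‖
      = if i = j then 0 else ((((i : ℤ) - (j : ℤ)).natAbs : ℝ))⁻¹ := by
  unfold triangularHilbertMatrix
  split
  · simp
  · rw [norm_inv, Complex.norm_intCast, Nat.cast_natAbs,
      abs_of_nonneg (by positivity : (0:ℝ) ≤ ((|(i:ℤ) - (j:ℤ)| : ℤ) : ℝ))]

lemma thm_entry_eq_norm (n : ℕ) (i j : Fin n) :
    triangularHilbertMatrix n i j = (‖triangularHilbertMatrix n i j‖ : ℂ) := by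
  rw [thm_norm_entry]
  unfold triangularHilbertMatrix
  split
  · simp
  · rw [Complex.ofReal_inv]
    congr 1
    rw [Nat.cast_natAbs]
    push_cast
    norm_cast

lemma rowSum_aux (n : ℕ) (a : ℕ) (ha : a < n) :
    ∑ m ∈ Finset.range n, (if m = a then 0 else ((((a:ℤ) - (m:ℤ)).natAbs : ℝ))⁻¹)
      = H a + H (n - 1 - a) := by
  set g : ℕ → ℝ := fun m => if m = a then 0 else ((((a:ℤ) - (m:ℤ)).natAbs : ℝ))⁻¹ with hg
  rw [Finset.range_eq_Ico, ← Finset.sum_Ico_consecutive _ (Nat.zero_le (a+1)) (by omega : a + 1 ≤ n)]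
  have h1 : ∑ m ∈ Finset.Ico 0 (a+1), g m = H a := by
    rw [← Finset.range_eq_Ico, Finset.sum_range_succ]
    have hga : g a = 0 := by simp [hg]
    rw [hga, add_zero]
    have e1 : ∀ m ∈ Finset.range a, g m = (((a - m : ℕ) : ℝ))⁻¹ := by
      intro m hm
      rw [Finset.mem_range] at hm
      rw [hg]
      simp only
      rw [if_neg (by omega)]
      congr 2
      omega
    rw [Finset.sum_congr rfl e1]
    rw [← Finset.sum_range_reflect (fun m => (((a - m : ℕ) : ℝ))⁻¹) a, H]
    refine Finset.sum_congr rfl fun k hk => ?_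
    rw [Finset.mem_range] at hk
    have : a - (a - 1 - k) = k + 1 := by omega
    rw [this]
    push_cast
    ring
  have h2 : ∑ m ∈ Finset.Ico (a+1) n, g m = H (n - 1 - a) := by
    rw [Finset.sum_Ico_eq_sum_range]
    have hn : n - (a+1) = n - 1 - a := by omega
    rw [hn, H]
    refine Finset.sum_congr rfl fun k hk => ?_
    rw [hg]
    simp only
    rw [if_neg (by omega)]
    have : ((a:ℤ) - (a + 1 + k : ℕ)).natAbs = k + 1 := by omega
    rw [this]
    push_cast
    ring
  rw [h1, h2]

lemma rowSum_eq (n : ℕ) (i : Fin n) :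
    ∑ j, ‖triangularHilbertMatrix n i j‖ = H i.val + H (n - 1 - i.val) := by
  have e : ∀ j : Fin n, ‖triangularHilbertMatrix n i j‖
      = (fun m : ℕ => if m = i.val then 0 else ((((i.val:ℤ) - (m:ℤ)).natAbs : ℝ))⁻¹) j.val := by
    intro j
    by_cases h : i = j
    · subst h; simp [thm_norm_entry, triangularHilbertMatrix]
    · have h2 : ¬ (j.val = i.val) := fun hv => h (Fin.ext hv.symm)
      rw [thm_norm_entry, if_neg h]
      simp only [h2, if_false]
  rw [Finset.sum_congr rfl fun j _ => e j,
    Fin.sum_univ_eq_sum_range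
      (fun m : ℕ => if m = i.val then 0 else ((((i.val:ℤ) - (m:ℤ)).natAbs : ℝ))⁻¹) n]
  exact rowSum_aux n i.val i.isLt

lemma colSum_eq_rowSum (n : ℕ) (j : Fin n) :
    ∑ i, ‖triangularHilbertMatrix n i j‖ = ∑ i, ‖triangularHilbertMatrix n j i‖ := by
  refine Finset.sum_congr rfl fun i _ => ?_
  rw [thm_norm_entry, thm_norm_entry]
  by_cases h : i = j
  · subst h; simp
  · rw [if_neg h, if_neg (Ne.symm h)]
    congr 2
    omega

lemma toEuclideanCLM_apply {n : ℕ} (B : Matrix (Fin n) (Fin n) ℂ)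
    (x : EuclideanSpace ℂ (Fin n)) (i : Fin n) :
    (Matrix.toEuclideanCLM (𝕜 := ℂ) B x) i = ∑ j, B i j * x j := by
  have h := Matrix.ofLp_toEuclideanCLM (𝕜 := ℂ) B x
  have := congrFun h i
  simpa [Matrix.toLin'_apply, Matrix.mulVec, dotProduct] using this

lemma schur_bound {n : ℕ} (B : Matrix (Fin n) (Fin n) ℂ) (r : ℝ) (hr : 0 ≤ r)
    (hrow : ∀ i, ∑ j, ‖B i j‖ ≤ r) (hcol : ∀ j, ∑ i, ‖B i j‖ ≤ r) :
    ‖Matrix.toEuclideanCLM (𝕜 := ℂ) B‖ ≤ r := by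
  refine ContinuousLinearMap.opNorm_le_bound _ hr fun x => ?_
  rw [EuclideanSpace.norm_eq]
  have key : ∑ i, ‖(Matrix.toEuclideanCLM (𝕜 := ℂ) B x) i‖ ^ 2 ≤ (r * ‖x‖) ^ 2 := by
    have step1 : ∀ i : Fin n, ‖(Matrix.toEuclideanCLM (𝕜 := ℂ) B x) i‖ ^ 2
        ≤ r * ∑ j, ‖B i j‖ * ‖x j‖ ^ 2 := by
      intro i
      rw [toEuclideanCLM_apply]
      have h1 : ‖∑ j, B i j * x j‖ ≤ ∑ j, ‖B i j‖ * ‖x j‖ := by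
        refine (norm_sum_le _ _).trans ?_
        refine Finset.sum_le_sum fun j _ => ?_
        rw [norm_mul]
      have h2 : (∑ j, ‖B i j‖ * ‖x j‖) ^ 2
          ≤ (∑ j, ‖B i j‖) * ∑ j, ‖B i j‖ * ‖x j‖ ^ 2 := by
        refine Finset.sum_sq_le_sum_mul_sum_of_sq_eq_mul _
          (fun j _ => norm_nonneg _) (fun j _ => by positivity) (fun j _ => by ring)
      calc ‖∑ j, B i j * x j‖ ^ 2 ≤ (∑ j, ‖B i j‖ * ‖x j‖) ^ 2 := by
            apply pow_le_pow_left₀ (norm_nonneg _) h1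
        _ ≤ (∑ j, ‖B i j‖) * ∑ j, ‖B i j‖ * ‖x j‖ ^ 2 := h2
        _ ≤ r * ∑ j, ‖B i j‖ * ‖x j‖ ^ 2 := by
            apply mul_le_mul_of_nonneg_right (hrow i)
            exact Finset.sum_nonneg fun j _ => by positivity
    calc ∑ i, ‖(Matrix.toEuclideanCLM (𝕜 := ℂ) B x) i‖ ^ 2
        ≤ ∑ i, r * ∑ j, ‖B i j‖ * ‖x j‖ ^ 2 := Finset.sum_le_sum fun i _ => step1 i
      _ = r * ∑ j, (∑ i, ‖B i j‖) * ‖x j‖ ^ 2 := by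
          rw [← Finset.mul_sum, Finset.sum_comm]
          congr 1
          refine Finset.sum_congr rfl fun j _ => ?_
          rw [Finset.sum_mul]
      _ ≤ r * ∑ j, r * ‖x j‖ ^ 2 := by
          refine mul_le_mul_of_nonneg_left (Finset.sum_le_sum fun j _ => ?_) hr
          exact mul_le_mul_of_nonneg_right (hcol j) (by positivity)
      _ = (r * ‖x‖) ^ 2 := by
          rw [← Finset.mul_sum, EuclideanSpace.norm_eq, mul_pow,
            Real.sq_sqrt (Finset.sum_nonneg fun j _ => by positivity)]
          ring
  calc Real.sqrt (∑ i, ‖(Matrix.toEuclideanCLM (𝕜 := ℂ) B x) i‖ ^ 2)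
      ≤ Real.sqrt ((r * ‖x‖) ^ 2) := Real.sqrt_le_sqrt key
    _ = r * ‖x‖ := Real.sqrt_sq (by positivity)

lemma rowSum_le (n : ℕ) (hn : 2 ≤ n) (i : Fin n) :
    ∑ j, ‖triangularHilbertMatrix n i j‖ ≤ 2 * (1 + Real.log n) := by
  rw [rowSum_eq]
  have h1 : H i.val ≤ H (n - 1) := H_mono (by omega)
  have h2 : H (n - 1 - i.val) ≤ H (n - 1) := H_mono (by omega)
  have h3 : H (n - 1) ≤ 1 + Real.log n := by
    refine (H_le (n-1)).trans ?_
    have : Real.log ((n:ℝ) - 1) ≤ Real.log n := by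
      apply Real.log_le_log (by norm_num; omega) (by norm_num)
    push_cast [Nat.cast_sub (by omega : 1 ≤ n)] at this ⊢
    linarith
  linarith

lemma rowSum_ge (n : ℕ) (hn : 2 ≤ n) (i : Fin n) :
    Real.log n / 2 ≤ ∑ j, ‖triangularHilbertMatrix n i j‖ := by
  rw [rowSum_eq]
  set a := i.val
  set m := max a (n - 1 - a) with hm
  have hHm : H m ≤ H a + H (n - 1 - a) := by
    rcases max_cases a (n - 1 - a) with ⟨h, _⟩ | ⟨h, _⟩ <;> rw [hm, h]
    · linarith [H_nonneg (n - 1 - a)]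
    · linarith [H_nonneg a]
  have hsq : n ≤ (m + 1) ^ 2 := by
    have h1 := Nat.le_max_left a (n-1-a)
    have h2 := Nat.le_max_right a (n-1-a)
    have ha : a < n := i.isLt
    calc n ≤ 2*m+1 := by omega
      _ ≤ (m+1)^2 := by nlinarith
  have hlog : Real.log n ≤ 2 * Real.log (m + 1) := by
    have h1 : Real.log n ≤ Real.log (((m+1)^2 : ℕ) : ℝ) :=
      Real.log_le_log (by positivity) (by exact_mod_cast hsq)
    have h2 : Real.log (((m+1)^2 : ℕ) : ℝ) = 2 * Real.log ((m:ℝ) + 1) := by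
      push_cast
      rw [Real.log_pow]
      ring
    linarith
  have := le_H m
  linarith

end KP

/-- Kwapień–Pełczyński: the triangular transform of the Hilbert matrix has operator
norm of the order `log n`. -/
theorem triangularHilbertMatrix_opNorm_log :
    ∃ c C : ℝ, 0 < c ∧ 0 < C ∧ ∀ n : ℕ, 2 ≤ n →
      c * Real.log n ≤ opNorm (triangularHilbertMatrix n) ∧
        opNorm (triangularHilbertMatrix n) ≤ C * Real.log n := by
  refine ⟨1/2, 6, by norm_num, by norm_num, fun n hn => ?_⟩
  have hlog2 : (1:ℝ)/2 ≤ Real.log 2 := by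
    have := Real.log_two_gt_d9
    linarith
  have hlogn : (1:ℝ)/2 ≤ Real.log n := by
    refine hlog2.trans (Real.log_le_log (by norm_num) ?_)
    exact_mod_cast hn
  constructor
  · -- lower bound
    set A := triangularHilbertMatrix n with hA
    set T := Matrix.toEuclideanCLM (𝕜 := ℂ) A with hT
    set x : EuclideanSpace ℂ (Fin n) := (WithLp.equiv 2 (Fin n → ℂ)).symm (fun _ => 1) with hx
    have hxc : ∀ j : Fin n, x j = 1 := fun j => rfl
    have hxnorm : ‖x‖ = Real.sqrt n := by
      rw [EuclideanSpace.norm_eq]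
      simp [hxc]
    have hAx : ∀ i, ‖(T x) i‖ = ∑ j, ‖A i j‖ := by
      intro i
      rw [hT, KP.toEuclideanCLM_apply]
      have : ∑ j, A i j * x j = (((∑ j, ‖A i j‖ : ℝ)) : ℂ) := by
        rw [Complex.ofReal_sum]
        refine Finset.sum_congr rfl fun j _ => ?_
        rw [hxc, mul_one]
        exact KP.thm_entry_eq_norm n i j
      rw [this, Complex.norm_real,
        Real.norm_of_nonneg (Finset.sum_nonneg fun j _ => norm_nonneg _)]
    set s : ℝ := Real.log n / 2 with hs
    have hs0 : 0 ≤ s := by rw [hs]; linarith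
    have hge : Real.sqrt n * s ≤ ‖T x‖ := by
      rw [EuclideanSpace.norm_eq]
      have h1 : (n : ℝ) * s ^ 2 ≤ ∑ i : Fin n, ‖(T x) i‖ ^ 2 := by
        have : ∀ i : Fin n, s ^ 2 ≤ ‖(T x) i‖ ^ 2 := by
          intro i
          rw [hAx]
          exact pow_le_pow_left₀ hs0 (KP.rowSum_ge n hn i) 2
        calc (n : ℝ) * s ^ 2 = ∑ _i : Fin n, s ^ 2 := by
              rw [Finset.sum_const, Finset.card_univ, Fintype.card_fin, nsmul_eq_mul]
          _ ≤ _ := Finset.sum_le_sum fun i _ => this i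
      calc Real.sqrt n * s = Real.sqrt ((n:ℝ) * s ^ 2) := by
            rw [Real.sqrt_mul (by positivity), Real.sqrt_sq hs0]
        _ ≤ _ := Real.sqrt_le_sqrt h1
    have hle : ‖T x‖ ≤ opNorm A * ‖x‖ := T.le_opNorm x
    rw [hxnorm] at hle
    have hsqrtpos : 0 < Real.sqrt n := Real.sqrt_pos.mpr (by positivity)
    have : Real.sqrt n * s ≤ opNorm A * Real.sqrt n := hge.trans hle
    have hfinal : s ≤ opNorm A := by
      have := (mul_le_mul_iff_left₀ hsqrtpos).mp (by linarith [this] : s * Real.sqrt n ≤ opNorm A * Real.sqrt n)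
      exact this
    rw [hs] at hfinal
    linarith
  · -- upper bound
    have h := KP.schur_bound (triangularHilbertMatrix n) (2 * (1 + Real.log n))
      (by linarith) (KP.rowSum_le n hn)
      (fun j => by rw [KP.colSum_eq_rowSum]; exact KP.rowSum_le n hn j)
    have : opNorm (triangularHilbertMatrix n) ≤ 2 * (1 + Real.log n) := h
    linarith
end
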